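/- In QHC, ⊢ ¬∇α ↔ ¬α and ⊢ ∇¬α ↔ ¬α, where ∇α := !?α. -/
import Mathlib


/- Problem (intuitionistic) formulas and proposition (classical) formulas of QHC. -/
mutual
inductive PF : Type
  | var : Nat → PF
  | bot : PF
  | and : PF → PF → PF
  | or : PF → PF → PF
  | imp : PF → PF → PF
  | bang : CF → PF
inductive CF : Type
  | var : Nat → CF
  | fls : CF
  | and : CF → CF → CF
  | or : CF → CF → CF
  | imp : CF → CF → CF
  | quest : PF → CF
end

def PF.neg (α : PF) : PF := α.imp PF.bot
def CF.neg (p : CF) : CF := p.imp CF.fls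
def PF.iff (α β : PF) : PF := (α.imp β).and (β.imp α)
def CF.iff (p q : CF) : CF := (p.imp q).and (q.imp p)
def CF.box (p : CF) : CF := CF.quest (PF.bang p)
def PF.nabla (α : PF) : PF := PF.bang (CF.quest α)

/- Derivability in QHC, parameterized by a set `Ax` of extra problem axioms
(used to treat the axiom ¬!0 and its variants uniformly). Intuitionistic logic
on problems, classical logic on propositions, the rules α ⊢ ?α and p ⊢ !p, and
the mixed axioms ?!p → p, α → !?α, !(p→q) → (!p → !q), ?(α→β) → (?α → ?β). -/
mutual
inductive ProvP (Ax : PF → Prop) : PF → Prop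
  | axm {α} : Ax α → ProvP Ax α
  | mp {α β} : ProvP Ax (α.imp β) → ProvP Ax α → ProvP Ax β
  | ak (α β : PF) : ProvP Ax (α.imp (β.imp α))
  | as (α β γ : PF) : ProvP Ax ((α.imp (β.imp γ)).imp ((α.imp β).imp (α.imp γ)))
  | andI (α β : PF) : ProvP Ax (α.imp (β.imp (α.and β)))
  | andE1 (α β : PF) : ProvP Ax ((α.and β).imp α)
  | andE2 (α β : PF) : ProvP Ax ((α.and β).imp β)
  | orI1 (α β : PF) : ProvP Ax (α.imp (α.or β))
  | orI2 (α β : PF) : ProvP Ax (β.imp (α.or β))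
  | orE (α β γ : PF) : ProvP Ax ((α.imp γ).imp ((β.imp γ).imp ((α.or β).imp γ)))
  | exf (α : PF) : ProvP Ax (PF.bot.imp α)
  | bangIntro {p} : ProvC Ax p → ProvP Ax (PF.bang p)
  | bangImp (p q : CF) : ProvP Ax ((PF.bang (p.imp q)).imp ((PF.bang p).imp (PF.bang q)))
  | bangQuest (α : PF) : ProvP Ax (α.imp (PF.bang (CF.quest α)))
inductive ProvC (Ax : PF → Prop) : CF → Prop
  | mp {p q} : ProvC Ax (p.imp q) → ProvC Ax p → ProvC Ax q
  | ak (p q : CF) : ProvC Ax (p.imp (q.imp p))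
  | as (p q r : CF) : ProvC Ax ((p.imp (q.imp r)).imp ((p.imp q).imp (p.imp r)))
  | andI (p q : CF) : ProvC Ax (p.imp (q.imp (p.and q)))
  | andE1 (p q : CF) : ProvC Ax ((p.and q).imp p)
  | andE2 (p q : CF) : ProvC Ax ((p.and q).imp q)
  | orI1 (p q : CF) : ProvC Ax (p.imp (p.or q))
  | orI2 (p q : CF) : ProvC Ax (q.imp (p.or q))
  | orE (p q r : CF) : ProvC Ax ((p.imp r).imp ((q.imp r).imp ((p.or q).imp r)))
  | exf (p : CF) : ProvC Ax (CF.fls.imp p)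
  | lem (p : CF) : ProvC Ax (p.or (p.imp CF.fls))
  | questIntro {α} : ProvP Ax α → ProvC Ax (CF.quest α)
  | questImp (α β : PF) : ProvC Ax ((CF.quest (α.imp β)).imp ((CF.quest α).imp (CF.quest β)))
  | questBang (p : CF) : ProvC Ax ((CF.quest (PF.bang p)).imp p)
end

/-- The axiom (!⊥): ¬!0. -/
def QHCAx : PF → Prop := fun α => α = (PF.bang CF.fls).imp PF.bot

/-- Derivability of a problem in QHC. -/
def PrvP (α : PF) : Prop := ProvP QHCAx α
/-- Derivability of a proposition in QHC. -/
def PrvC (p : CF) : Prop := ProvC QHCAx p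

section Helpers
variable {Ax : PF → Prop}

lemma compP {a b c : PF} (h1 : ProvP Ax (a.imp b)) (h2 : ProvP Ax (b.imp c)) :
    ProvP Ax (a.imp c) :=
  ProvP.mp (ProvP.mp (ProvP.as a b c) (ProvP.mp (ProvP.ak (b.imp c) a) h2)) h1

lemma compC {a b c : CF} (h1 : ProvC Ax (a.imp b)) (h2 : ProvC Ax (b.imp c)) :
    ProvC Ax (a.imp c) :=
  ProvC.mp (ProvC.mp (ProvC.as a b c) (ProvC.mp (ProvC.ak (b.imp c) a) h2)) h1

lemma BP (a b c : PF) : ProvP Ax ((b.imp c).imp ((a.imp b).imp (a.imp c))) :=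
  compP (ProvP.ak (b.imp c) a) (ProvP.as a b c)

lemma swapP {a b c : PF} (h : ProvP Ax (a.imp (b.imp c))) :
    ProvP Ax (b.imp (a.imp c)) :=
  compP (ProvP.ak b a) (ProvP.mp (ProvP.as a b c) h)

/-- from ⊢ a→b infer ⊢ (b→c)→(a→c) -/
lemma precompP {a b : PF} (c : PF) (h : ProvP Ax (a.imp b)) :
    ProvP Ax ((b.imp c).imp (a.imp c)) :=
  ProvP.mp (swapP (BP a b c)) h

/-- from ⊢ b→c infer ⊢ (a→b)→(a→c) -/
lemma postcompP {b c : PF} (a : PF) (h : ProvP Ax (b.imp c)) :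
    ProvP Ax ((a.imp b).imp (a.imp c)) :=
  ProvP.mp (BP a b c) h

end Helpers

/-- ⊢ !?⊥ → ⊥ in QHC. -/
lemma nablaBot : PrvP ((PF.bang (CF.quest PF.bot)).imp PF.bot) := by
  have c1 : ProvC QHCAx ((CF.quest PF.bot).imp CF.fls) :=
    compC (ProvC.mp (ProvC.questImp PF.bot (PF.bang CF.fls))
        (ProvC.questIntro (ProvP.exf (PF.bang CF.fls))))
      (ProvC.questBang CF.fls)
  exact compP (ProvP.mp (ProvP.bangImp _ _) (ProvP.bangIntro c1)) (ProvP.axm rfl)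

/-- ⊢ !?(α→⊥) → (!?α → !?⊥). -/
lemma nablaK (α : PF) : PrvP ((PF.bang (CF.quest (α.imp PF.bot))).imp
    ((PF.bang (CF.quest α)).imp (PF.bang (CF.quest PF.bot)))) :=
  compP (ProvP.mp (ProvP.bangImp _ _)
      (ProvP.bangIntro (ProvC.questImp α PF.bot)))
    (ProvP.bangImp (CF.quest α) (CF.quest PF.bot))

theorem qhc_neg_nabla (α : PF) :
    PrvP (PF.iff (PF.neg (PF.nabla α)) (PF.neg α)) ∧
    PrvP (PF.iff (PF.nabla (PF.neg α)) (PF.neg α)) := by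
  -- ⊢ ¬∇α → ¬α
  have g1a : PrvP ((PF.neg (PF.nabla α)).imp (PF.neg α)) :=
    precompP PF.bot (ProvP.bangQuest α)
  -- ⊢ !?(α→⊥) → (!?α → ⊥)
  have h1 : PrvP ((PF.bang (CF.quest (α.imp PF.bot))).imp
      ((PF.bang (CF.quest α)).imp PF.bot)) :=
    compP (nablaK α) (postcompP _ nablaBot)
  -- ⊢ ¬α → ¬∇α
  have g1b : PrvP ((PF.neg α).imp (PF.neg (PF.nabla α))) :=
    compP (ProvP.bangQuest (α.imp PF.bot)) h1
  -- ⊢ ∇¬α → ¬α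
  have g2a : PrvP ((PF.nabla (PF.neg α)).imp (PF.neg α)) := compP h1 g1a
  -- ⊢ ¬α → ∇¬α
  have g2b : PrvP ((PF.neg α).imp (PF.nabla (PF.neg α))) :=
    ProvP.bangQuest (α.imp PF.bot)
  exact ⟨ProvP.mp (ProvP.mp (ProvP.andI _ _) g1a) g1b,
         ProvP.mp (ProvP.mp (ProvP.andI _ _) g2a) g2b⟩
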